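/- Let γ = (√5−1)/2, G(n) = ⌊(n+1)γ⌋, L(n) = ⌊nφ⌋, U(n) = ⌊nφ²⌋ with φ = (1+√5)/2, and let W be the Wythoff swap sequence. Then for every M ≥ 1: G(U(M)) = L(M) = W(U(M)), and G(L(M)) = M = U(M) − L(M) = W(L(M)) − L(M). -/

import Mathlib

/-- For Hofstadter's G-sequence `G(n) = ⌊(n+1)γ⌋`, the Wythoff sequences
`L, U`, and the Wythoff swap sequence `W`, one has for all `M ≥ 1`:
`G(U(M)) = L(M) = W(U(M))` and `G(L(M)) = M = U(M) − L(M) = W(L(M)) − L(M)`. -/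
theorem G_on_wythoff_values
    (φ γ : ℝ) (hφ : φ = (1 + Real.sqrt 5) / 2) (hγ : γ = (Real.sqrt 5 - 1) / 2)
    (G : ℕ → ℕ) (hG : ∀ n : ℕ, G n = ⌊((n : ℝ) + 1) * γ⌋₊)
    (L U : ℕ → ℕ)
    (hL : ∀ n : ℕ, L n = ⌊(n : ℝ) * φ⌋₊)
    (hU : ∀ n : ℕ, U n = ⌊(n : ℝ) * φ ^ 2⌋₊)
    (W : ℕ → ℕ) (hW0 : W 0 = 0)
    (hWL : ∀ k : ℕ, 1 ≤ k → W (L k) = U k)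
    (hWU : ∀ k : ℕ, 1 ≤ k → W (U k) = L k) :
    ∀ M : ℕ, 1 ≤ M →
      (G (U M) = L M ∧ L M = W (U M)) ∧
      (G (L M) = M ∧ M = U M - L M ∧ U M - L M = W (L M) - L M) := by
  have h5 : Real.sqrt 5 ^ 2 = 5 := Real.sq_sqrt (by norm_num)
  have hs2 : (2 : ℝ) < Real.sqrt 5 := by
    nlinarith [Real.sqrt_nonneg 5]
  have hφ2 : φ ^ 2 = φ + 1 := by rw [hφ]; nlinarith
  have hγφ : γ * φ = 1 := by rw [hφ, hγ]; nlinarith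
  have hφγ : φ = γ + 1 := by rw [hφ, hγ]; ring
  have hγpos : 0 < γ := by rw [hγ]; nlinarith
  have hγlt : γ < 1 := by rw [hγ]; nlinarith
  have hφpos : 0 < φ := by rw [hφγ]; linarith
  intro M hM
  have hx0 : (0 : ℝ) ≤ (M : ℝ) * φ := by positivity
  have hle : ((L M : ℝ)) ≤ (M : ℝ) * φ := by rw [hL]; exact Nat.floor_le hx0
  have hlt : (M : ℝ) * φ < (L M : ℝ) + 1 := by rw [hL]; exact Nat.lt_floor_add_one _
  have hUL : U M = L M + M := by
    rw [hU, hL]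
    have : (M : ℝ) * φ ^ 2 = (M : ℝ) * φ + (M : ℕ) := by rw [hφ2]; push_cast; ring
    rw [this, Nat.floor_add_natCast hx0]
  have hMγ : (M : ℝ) * φ * γ = M := by
    rw [mul_assoc, mul_comm φ γ, hγφ, mul_one]
  have hGL : G (L M) = M := by
    rw [hG]
    rw [Nat.floor_eq_iff (by positivity)]
    constructor
    · nlinarith
    · nlinarith
  have hGU : G (U M) = L M := by
    rw [hG, hUL]
    rw [Nat.floor_eq_iff (by positivity)]
    push_cast
    constructor
    · nlinarith
    · nlinarith
  refine ⟨⟨hGU, (hWU M hM).symm⟩, hGL, by omega, ?_⟩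
  rw [hWL M hM]
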